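/- (Appendix E allocation lemma.) Let N ≥ 2 and 1 ≤ b ≤ N − 1. Set α = b·⌈(N−b)/b⌉ − (N−b), let p_i = ⌊(N−b)/b⌋ for 1 ≤ i ≤ α and p_i = ⌈(N−b)/b⌉ for α < i ≤ b, and define r_1 = 1 and r_{i+1} = r_i + 1 + p_i for 1 ≤ i ≤ b − 1; put R = {r_1, …, r_b} ⊆ {1, …, N}. Then for every N_r with 1 ≤ N_r ≤ N and every n ∈ ZMod N, the cyclic window {n, n+1, …, n+(N−N_r)} ⊆ ZMod N contains at most ⌈(N − N_r + 1) / ⌊N/b⌋⌉ elements of the image of R in ZMod N. -/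

import Mathlib

lemma aux_int_contra {N w : ℤ} (hdvd : N ∣ w) (h1 : w ≠ 0) (h2 : -N < w) (h3 : w < N) : False := by
  have h4 : N ∣ |w| := (dvd_abs N w).mpr hdvd
  have h5 : (0:ℤ) < |w| := abs_pos.mpr h1
  have h6 := Int.le_of_dvd h5 h4
  rcases abs_cases w with ⟨h, _⟩ | ⟨h, _⟩ <;> omega

lemma aux_count {d L : ℕ} (hd : 0 < d) (S : Finset ℕ) (hS : S ⊆ Finset.range L)
    (hsep : ∀ j ∈ S, ∀ j' ∈ S, j < j' → d ≤ j' - j) : S.card ≤ (L + d - 1) / d := by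
  have key : ∀ j ∈ S, ∀ j' ∈ S, j / d = j' / d → j = j' := by
    intro j hj j' hj' h
    rcases Nat.lt_trichotomy j j' with hlt | heq | hgt
    · exfalso
      have hs := hsep j hj j' hj' hlt
      have e1 := Nat.div_add_mod j d
      have e2 := Nat.div_add_mod j' d
      have h3 : j % d < d := Nat.mod_lt _ hd
      have h4 : j' % d < d := Nat.mod_lt _ hd
      rw [h] at e1; omega
    · exact heq
    · exfalso
      have hs := hsep j' hj' j hj hgt
      have e1 := Nat.div_add_mod j d
      have e2 := Nat.div_add_mod j' d
      have h3 : j % d < d := Nat.mod_lt _ hd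
      have h4 : j' % d < d := Nat.mod_lt _ hd
      rw [h] at e1; omega
  have himg : ∀ j ∈ S, j / d ∈ Finset.range ((L + d - 1) / d) := by
    intro j hj
    have hjL : j < L := Finset.mem_range.mp (hS hj)
    have hL1 : 1 ≤ L := by omega
    have h1 : j ≤ L - 1 := by omega
    have h2 : j / d ≤ (L - 1) / d := Nat.div_le_div_right h1
    have h3 : (L - 1 + d) / d = (L - 1) / d + 1 := Nat.add_div_right _ hd
    have h4 : L + d - 1 = L - 1 + d := by omega
    rw [Finset.mem_range, h4, h3]
    omega
  calc S.card = (S.image (· / d)).card := (Finset.card_image_of_injOn (fun a ha b hb h => key a ha b hb h)).symm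
    _ ≤ (Finset.range ((L + d - 1) / d)).card := Finset.card_le_card (by
        intro x hx
        obtain ⟨j, hj, rfl⟩ := Finset.mem_image.mp hx
        exact himg j hj)
    _ = (L + d - 1) / d := Finset.card_range _


/-- Appendix E allocation lemma: with `α = b⌈(N−b)/b⌉ − (N−b)`,
`p_i = ⌊(N−b)/b⌋` for `i ≤ α` and `p_i = ⌈(N−b)/b⌉` otherwise, `r_1 = 1`,
`r_{i+1} = r_i + 1 + p_i`, and `R = {r_1, …, r_b}`, every cyclic window
`{n, n+1, …, n+(N−N_r)}` in `ZMod N` contains at most `⌈(N − N_r + 1)/⌊N/b⌋⌉` elements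
of the image of `R` in `ZMod N`.  (Here `r` is given by its closed form
`r_{i+1} = 1 + ∑_{j ≤ i} (1 + p_j)`.) -/
theorem stmt_11 (N b : ℕ) (hN : 2 ≤ N) (hb1 : 1 ≤ b) (hb2 : b ≤ N - 1) :
    let cdiv : ℕ → ℕ → ℕ := fun x y => (x + y - 1) / y
    let α : ℕ := b * cdiv (N - b) b - (N - b)
    let p : ℕ → ℕ := fun i => if i ≤ α then (N - b) / b else cdiv (N - b) b
    let r : ℕ → ℕ := fun i => 1 + ∑ j ∈ Finset.range i, (1 + p (j + 1))
    ∀ Nr : ℕ, 1 ≤ Nr → Nr ≤ N → ∀ n : ZMod N,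
      ((((Finset.range (N - Nr + 1)).image fun j : ℕ => n + (j : ZMod N)) ∩
        ((Finset.range b).image fun i : ℕ => ((r i : ℕ) : ZMod N)))).card ≤
      cdiv (N - Nr + 1) (N / b) := by
  intro cdiv α p r Nr hNr1 hNr2 n
  have hcdiv : ∀ x y, cdiv x y = (x + y - 1) / y := fun _ _ => rfl
  have hαval : α = b * cdiv (N - b) b - (N - b) := rfl
  have hp : ∀ i, p i = if i ≤ α then (N - b) / b else cdiv (N - b) b := fun _ => rfl
  have hrdef : ∀ i, r i = 1 + ∑ j ∈ Finset.range i, (1 + p (j + 1)) := fun _ => rfl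
  have hb0 : 0 < b := hb1
  have hbN : b ≤ N := by omega
  set q : ℕ := (N - b) / b with hq
  set Q : ℕ := cdiv (N - b) b with hQ
  -- basic div facts
  have em : b * q + (N - b) % b = N - b := Nat.div_add_mod _ b
  have emlt : (N - b) % b < b := Nat.mod_lt _ hb0
  have hQeq : Q = (N - 1) / b := by
    rw [hQ, hcdiv]
    congr 1
    omega
  have eQ : b * ((N - 1) / b) + (N - 1) % b = N - 1 := Nat.div_add_mod _ b
  have eQlt : (N - 1) % b < b := Nat.mod_lt _ hb0
  have hQlb : N - b ≤ b * Q := by rw [hQeq]; omega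
  have hQub : b * Q ≤ N - 1 := by rw [hQeq]; omega
  have hqQ : q ≤ Q := by
    rw [hq, hQeq]
    exact Nat.div_le_div_right (by omega)
  have hQq1 : Q ≤ q + 1 := by
    by_contra hcon
    push_neg at hcon
    have h2 : b * (q + 2) ≤ b * Q := Nat.mul_le_mul_left b hcon
    have h3 : b * (q + 2) = b * q + 2 * b := by ring
    omega
  have hαle : α ≤ b := by rw [hαval]; omega
  -- N / b = q + 1
  have hd : N / b = q + 1 := by
    have h1 : N = b * (q + 1) + (N - b) % b := by
      have : b * (q + 1) = b * q + b := by ring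
      omega
    rw [h1, Nat.mul_add_div hb0, Nat.div_eq_of_lt emlt]
  -- sum of p over range b
  have hsum : ∑ j ∈ Finset.range b, p (j + 1) = N - b := by
    have hrw : ∀ j, p (j + 1) = if j < α then q else Q := by
      intro j
      rw [hp]
      rcases Nat.lt_or_ge j α with h | h
      · rw [if_pos (by omega), if_pos h]
      · rw [if_neg (by omega), if_neg (by omega)]
    simp only [hrw]
    rw [Finset.range_eq_Ico, ← Finset.sum_Ico_consecutive _ (Nat.zero_le α) hαle]
    have h1 : ∑ j ∈ Finset.Ico 0 α, (if j < α then q else Q) = α * q := by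
      rw [Finset.sum_congr rfl (fun j hj => if_pos (Finset.mem_Ico.mp hj).2)]
      rw [Finset.sum_const, Nat.card_Ico, smul_eq_mul, Nat.sub_zero]
    have h2 : ∑ j ∈ Finset.Ico α b, (if j < α then q else Q) = (b - α) * Q := by
      rw [Finset.sum_congr rfl (fun j hj => if_neg (by
        have := (Finset.mem_Ico.mp hj).1; omega))]
      rw [Finset.sum_const, Nat.card_Ico, smul_eq_mul]
    rw [h1, h2]
    have hQcase : Q = q ∨ Q = q + 1 := by omega
    rcases hQcase with hc | hc
    · -- b*Q = b*q ≥ N - b and b*q ≤ N-b so equal, mod = 0, α = 0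
      rw [hc] at hQlb
      have hα0 : α = 0 := by rw [hαval, hc]; omega
      rw [hα0, hc]
      simp only [Nat.zero_mul, Nat.sub_zero, Nat.zero_add]
      omega
    · have hbq1 : b * Q = b * q + b := by rw [hc]; ring
      have hα2 : α = b - (N - b) % b := by rw [hαval]; omega
      have hle1 : (N - b) % b * q ≤ b * q := Nat.mul_le_mul_right q (le_of_lt emlt)
      have e3 : (b - α) * Q = (N - b) % b * q + (N - b) % b := by
        rw [hc, hα2]
        have : b - (b - (N - b) % b) = (N - b) % b := by omega
        rw [this]; ring
      have e4 : α * q = b * q - (N - b) % b * q := by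
        rw [hα2, Nat.sub_mul]
      omega
  -- gap lower bound
  have hglow : ∀ j : ℕ, q + 1 ≤ 1 + p (j + 1) := by
    intro j
    rw [hp]
    split <;> omega
  -- splitting r
  have hrsplit : ∀ i i' : ℕ, i ≤ i' → r i' = r i + ∑ j ∈ Finset.Ico i i', (1 + p (j + 1)) := by
    intro i i' h
    rw [hrdef, hrdef, Finset.range_eq_Ico, Finset.range_eq_Ico]
    have h2 : ∑ j ∈ Finset.Ico 0 i, (1 + p (j + 1)) + ∑ j ∈ Finset.Ico i i', (1 + p (j + 1)) =
        ∑ j ∈ Finset.Ico 0 i', (1 + p (j + 1)) :=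
      Finset.sum_Ico_consecutive _ (Nat.zero_le i) h
    omega
  have hsumge : ∀ i i' : ℕ, i ≤ i' → (i' - i) * (q + 1) ≤ ∑ j ∈ Finset.Ico i i', (1 + p (j + 1)) := by
    intro i i' h
    have := Finset.card_nsmul_le_sum (Finset.Ico i i') (fun j => 1 + p (j + 1)) (q + 1)
      (fun j _ => hglow j)
    rwa [Nat.card_Ico, smul_eq_mul] at this
  have hrb : r b = N + 1 := by
    rw [hrdef, Finset.sum_add_distrib, Finset.sum_const, Finset.card_range, smul_eq_mul, hsum]
    omega
  have hr1 : ∀ i, 1 ≤ r i := by intro i; rw [hrdef]; omega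
  -- gap bounds for i < i' < b
  have hgap : ∀ i i' : ℕ, i < i' → i' < b →
      q + 1 ≤ r i' - r i ∧ r i' - r i ≤ N - (q + 1) ∧ r i ≤ r i' := by
    intro i i' h1 h2
    have hs1 := hrsplit i i' (le_of_lt h1)
    have hs2 := hrsplit i' b (le_of_lt h2)
    have hg1 := hsumge i i' (le_of_lt h1)
    have hg2 := hsumge i' b (le_of_lt h2)
    have hm1 : 1 * (q + 1) ≤ (i' - i) * (q + 1) := Nat.mul_le_mul_right _ (by omega)
    have hm2 : 1 * (q + 1) ≤ (b - i') * (q + 1) := Nat.mul_le_mul_right _ (by omega)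
    have := hr1 i
    omega
  have hq1N : q + 1 ≤ N := by
    have hs2 := hrsplit 0 b (Nat.zero_le b)
    have hg2 := hsumge 0 b (Nat.zero_le b)
    have hm2 : 1 * (q + 1) ≤ (b - 0) * (q + 1) := Nat.mul_le_mul_right _ (by omega)
    have := hr1 0
    omega
  -- separation in ZMod N
  have hsep : ∀ i < b, ∀ i' < b, ∀ t : ℕ, 0 < t → t < q + 1 →
      ((r i' : ℕ) : ZMod N) ≠ ((r i : ℕ) : ZMod N) + (t : ℕ) := by
    intro i hi i' hi' t ht1 ht2 heq
    have heq2 : ((r i' : ℕ) : ZMod N) = (((r i + t : ℕ)) : ZMod N) := by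
      push_cast
      rw [heq]
    have hmod : r i' ≡ r i + t [MOD N] := (ZMod.natCast_eq_natCast_iff _ _ _).mp heq2
    have hdvd : (N : ℤ) ∣ ((r i : ℤ) + t - r i') := hmod.dvd
    rcases Nat.lt_trichotomy i i' with hlt | hE | hgt
    · obtain ⟨hA, hB, hC⟩ := hgap i i' hlt hi'
      refine aux_int_contra hdvd ?_ ?_ ?_ <;>
        · have hA' : (q:ℤ) + 1 ≤ (r i' : ℤ) - r i := by
            zify at hA hC ⊢
            omega
          have hB' : (r i' : ℤ) - r i ≤ (N:ℤ) - (q + 1) := by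
            zify at hB hC ⊢
            omega
          push_cast
          omega
    · subst hE
      refine aux_int_contra hdvd ?_ ?_ ?_ <;> push_cast <;> omega
    · obtain ⟨hA, hB, hC⟩ := hgap i' i hgt hi
      refine aux_int_contra hdvd ?_ ?_ ?_ <;>
        · have hA' : (q:ℤ) + 1 ≤ (r i : ℤ) - r i' := by
            zify at hA hC ⊢
            omega
          have hB' : (r i : ℤ) - r i' ≤ (N:ℤ) - (q + 1) := by
            zify at hB hC ⊢
            omega
          push_cast
          omega
  -- the offset set S
  set L : ℕ := N - Nr + 1 with hL
  set S : Finset ℕ := (Finset.range L).filter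
    (fun j => ∃ i < b, ((r i : ℕ) : ZMod N) = n + (j : ZMod N)) with hS
  have hsub : (((Finset.range L).image fun j : ℕ => n + (j : ZMod N)) ∩
        ((Finset.range b).image fun i : ℕ => ((r i : ℕ) : ZMod N)))
      ⊆ S.image (fun j : ℕ => n + (j : ZMod N)) := by
    intro x hx
    rw [Finset.mem_inter] at hx
    obtain ⟨hx1, hx2⟩ := hx
    obtain ⟨j, hj, hjx⟩ := Finset.mem_image.mp hx1
    obtain ⟨i, hi, hix⟩ := Finset.mem_image.mp hx2
    rw [Finset.mem_range] at hj hi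
    refine Finset.mem_image.mpr ⟨j, ?_, hjx⟩
    rw [hS, Finset.mem_filter, Finset.mem_range]
    exact ⟨hj, i, hi, by rw [hix, hjx]⟩
  have hsepS : ∀ j ∈ S, ∀ j' ∈ S, j < j' → q + 1 ≤ j' - j := by
    intro j hj j' hj' hlt
    by_contra hcon
    push_neg at hcon
    rw [hS, Finset.mem_filter] at hj hj'
    obtain ⟨_, i, hi, hieq⟩ := hj
    obtain ⟨_, i', hi', hieq'⟩ := hj'
    refine hsep i hi i' hi' (j' - j) (by omega) hcon ?_
    rw [hieq, hieq']
    have : (j' : ZMod N) = ((j : ℕ) : ZMod N) + ((j' - j : ℕ) : ZMod N) := by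
      rw [← Nat.cast_add]
      congr 1
      omega
    rw [this]
    ring
  have hcardS : S.card ≤ (L + (q + 1) - 1) / (q + 1) :=
    aux_count (Nat.succ_pos q) S (by rw [hS]; exact Finset.filter_subset _ _) hsepS
  calc (((Finset.range L).image fun j : ℕ => n + (j : ZMod N)) ∩
        ((Finset.range b).image fun i : ℕ => ((r i : ℕ) : ZMod N))).card
      ≤ (S.image (fun j : ℕ => n + (j : ZMod N))).card := Finset.card_le_card hsub
    _ ≤ S.card := Finset.card_image_le
    _ ≤ (L + (q + 1) - 1) / (q + 1) := hcardS
    _ = cdiv L (N / b) := by rw [hcdiv, hd]
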